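/- arXiv:2602.07811 — 3 statements merged into one kernel-verified Lean document; each statement's English description precedes it below -/
import Mathlib

section
/- Under the hypotheses of the monotonicity lemma (BPR link costs t_a(x) = t_a^0 (1 + α (x / c_a)^β) with t_a^0, c_a, α > 0 and β ≥ 1, link flows x(f) = Δf, and path cost operator F(f)_{k,m}^{rs} = Σ_a (γ t_a(x_a(f)) + C_m l_a) δ_{ka}^{rs} with γ > 0), the operator F is strictly monotone with respect to link flows: for all nonnegative f, f' ∈ ℝ^n with Δf ≠ Δf', one has ⟨F(f) − F(f'), f − f'⟩ > 0. -/
/-- Strict monotonicity of the BPR function on nonnegative reals. -/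
lemma bpr_strict (t0 c α β : ℝ) (ht0 : 0 < t0) (hc : 0 < c) (hα : 0 < α)
    (hβ : 1 ≤ β) (u v : ℝ) (hu : 0 ≤ u) (hv : 0 ≤ v) (huv : v < u) :
    0 < (t0 * (1 + α * (u / c) ^ β) - t0 * (1 + α * (v / c) ^ β)) * (u - v) := by
  have h1 : (v / c : ℝ) < u / c := by gcongr
  have h2 : (v / c : ℝ) ^ β < (u / c) ^ β :=
    Real.rpow_lt_rpow (div_nonneg hv hc.le) h1 (lt_of_lt_of_le one_pos hβ)
  have h3 : 0 < t0 * (1 + α * (u / c) ^ β) - t0 * (1 + α * (v / c) ^ β) := by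
    nlinarith [mul_pos (mul_pos ht0 hα) (sub_pos.mpr h2)]
  exact mul_pos h3 (sub_pos.mpr huv)

lemma bpr_mono (t0 c α β : ℝ) (ht0 : 0 < t0) (hc : 0 < c) (hα : 0 < α)
    (hβ : 1 ≤ β) (u v : ℝ) (hu : 0 ≤ u) (hv : 0 ≤ v) :
    0 ≤ (t0 * (1 + α * (u / c) ^ β) - t0 * (1 + α * (v / c) ^ β)) * (u - v) := by
  rcases lt_trichotomy u v with h | h | h
  · have := bpr_strict t0 c α β ht0 hc hα hβ v u hv hu h
    nlinarith
  · simp [h]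
  · exact (bpr_strict t0 c α β ht0 hc hα hβ u v hu hv h).le

/-!
STATEMENT 2 (Strict monotonicity with respect to link flows).
Under the hypotheses of the BPR monotonicity lemma, for all nonnegative path
flow vectors `f, f'` inducing different link flows (`Δf ≠ Δf'`), one has
`⟨F(f) − F(f'), f − f'⟩ > 0`.
-/
theorem stmt_2
    {A ι : Type*} [Fintype A] [Fintype ι]
    (t0 c l : A → ℝ) (ht0 : ∀ a, 0 < t0 a) (hc : ∀ a, 0 < c a) (hl : ∀ a, 0 ≤ l a)
    (α β γ : ℝ) (hα : 0 < α) (hβ : 1 ≤ β) (hγ : 0 < γ)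
    (δ : A → ι → ℝ) (hδ : ∀ a i, δ a i = 0 ∨ δ a i = 1)
    (Cm : ι → ℝ) (hCm : ∀ i, 0 ≤ Cm i)
    (t : A → ℝ → ℝ) (ht : ∀ a x, t a x = t0 a * (1 + α * (x / c a) ^ β))
    (x : A → (ι → ℝ) → ℝ) (hx : ∀ a f, x a f = ∑ i, δ a i * f i)
    (F : (ι → ℝ) → ι → ℝ)
    (hF : ∀ f i, F f i = ∑ a, (γ * t a (x a f) + Cm i * l a) * δ a i) :
    ∀ f f' : ι → ℝ, (∀ i, 0 ≤ f i) → (∀ i, 0 ≤ f' i) →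
      (fun a => x a f) ≠ (fun a => x a f') →
      0 < ∑ i, (F f i - F f' i) * (f i - f' i) := by
  intro f f' hf hf' hne
  -- link flows are nonnegative
  have hxnn : ∀ a (g : ι → ℝ), (∀ i, 0 ≤ g i) → 0 ≤ x a g := by
    intro a g hg
    rw [hx]
    apply Finset.sum_nonneg
    intro i _
    rcases hδ a i with h | h <;> simp [h, hg i]
  -- difference of link flows
  have hxd : ∀ a, x a f - x a f' = ∑ i, δ a i * (f i - f' i) := by
    intro a
    rw [hx, hx, ← Finset.sum_sub_distrib]
    exact Finset.sum_congr rfl (fun i _ => by ring)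
  -- rewrite the inner product over paths as a sum over links
  have key : ∑ i, (F f i - F f' i) * (f i - f' i)
      = ∑ a, γ * (t a (x a f) - t a (x a f')) * (x a f - x a f') := by
    have h1 : ∀ i, F f i - F f' i
        = ∑ a, γ * (t a (x a f) - t a (x a f')) * δ a i := by
      intro i
      rw [hF, hF, ← Finset.sum_sub_distrib]
      exact Finset.sum_congr rfl (fun a _ => by ring)
    calc ∑ i, (F f i - F f' i) * (f i - f' i)
        = ∑ i, ∑ a, γ * (t a (x a f) - t a (x a f')) * (δ a i * (f i - f' i)) := by
          refine Finset.sum_congr rfl (fun i _ => ?_)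
          rw [h1, Finset.sum_mul]
          exact Finset.sum_congr rfl (fun a _ => by ring)
      _ = ∑ a, ∑ i, γ * (t a (x a f) - t a (x a f')) * (δ a i * (f i - f' i)) :=
          Finset.sum_comm
      _ = ∑ a, γ * (t a (x a f) - t a (x a f')) * (x a f - x a f') := by
          refine Finset.sum_congr rfl (fun a _ => ?_)
          rw [← Finset.mul_sum, hxd]
  rw [key]
  -- each summand is nonnegative
  have hterm : ∀ a, 0 ≤ γ * (t a (x a f) - t a (x a f')) * (x a f - x a f') := by
    intro a
    have := bpr_mono (t0 a) (c a) α β (ht0 a) (hc a) hα hβ (x a f) (x a f')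
      (hxnn a f hf) (hxnn a f' hf')
    rw [ht, ht]
    nlinarith
  -- some summand is positive
  obtain ⟨a0, ha0⟩ : ∃ a, x a f ≠ x a f' := by
    by_contra h
    push_neg at h
    exact hne (funext h)
  have hpos : 0 < γ * (t a0 (x a0 f) - t a0 (x a0 f')) * (x a0 f - x a0 f') := by
    rcases lt_or_gt_of_ne ha0 with h | h
    · have := bpr_strict (t0 a0) (c a0) α β (ht0 a0) (hc a0) hα hβ (x a0 f') (x a0 f)
        (hxnn a0 f' hf') (hxnn a0 f hf) h
      rw [ht, ht]
      nlinarith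
    · have := bpr_strict (t0 a0) (c a0) α β (ht0 a0) (hc a0) hα hβ (x a0 f) (x a0 f')
        (hxnn a0 f hf) (hxnn a0 f' hf') h
      rw [ht, ht]
      nlinarith
  exact Finset.sum_pos' (fun a _ => hterm a) ⟨a0, Finset.mem_univ a0, hpos⟩
end

section
/- Let y ∈ ℝ^K and d > 0, and let S = {x ∈ ℝ^K : x ≥ 0, Σ_{i=1}^K x_i = d} be the simplex scaled by d. Then the Euclidean projection of y onto S exists, is unique, and is given componentwise by x_i = max(y_i − τ, 0), where τ ∈ ℝ is the unique real number satisfying Σ_{i=1}^K max(y_i − τ, 0) = d. -/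
private lemma stmt7_norm_sq {K : ℕ} (w : EuclideanSpace ℝ (Fin K)) :
    ‖w‖ ^ 2 = ∑ i, (w i) ^ 2 := by
  rw [EuclideanSpace.norm_eq, Real.sq_sqrt (by positivity)]
  simp [Real.norm_eq_abs, sq_abs]

private lemma stmt7_expand {K : ℕ} (z x y : EuclideanSpace ℝ (Fin K)) :
    ‖z - y‖ ^ 2 =
      ‖x - y‖ ^ 2 + ‖z - x‖ ^ 2 - 2 * ∑ i, (y i - x i) * (z i - x i) := by
  simp only [stmt7_norm_sq, PiLp.sub_apply, Finset.mul_sum]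
  rw [← Finset.sum_add_distrib, ← Finset.sum_sub_distrib]
  exact Finset.sum_congr rfl fun i _ => by ring

/-!
STATEMENT 7 (Projection onto the scaled simplex).
-/
theorem stmt_7
    {K : ℕ} (hK : 0 < K)
    (y : EuclideanSpace ℝ (Fin K)) (d : ℝ) (hd : 0 < d)
    (S : Set (EuclideanSpace ℝ (Fin K)))
    (hS : S = {x | (∀ i, 0 ≤ x i) ∧ ∑ i, x i = d}) :
    (∃! τ : ℝ, ∑ i, max (y i - τ) 0 = d) ∧
    (∀ τ : ℝ, (∑ i, max (y i - τ) 0 = d) →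
      ∀ x : EuclideanSpace ℝ (Fin K),
        (x ∈ S ∧ ∀ z ∈ S, ‖x - y‖ ≤ ‖z - y‖) ↔ (∀ i, x i = max (y i - τ) 0)) := by
  have hne : Nonempty (Fin K) := ⟨⟨0, hK⟩⟩
  have hune : (Finset.univ : Finset (Fin K)).Nonempty := Finset.univ_nonempty
  set f : ℝ → ℝ := fun τ => ∑ i, max (y i - τ) 0 with hfdef
  -- strict monotonicity where positive
  have hanti : ∀ τ₁ τ₂ : ℝ, τ₁ < τ₂ → 0 < f τ₂ → f τ₂ < f τ₁ := by
    intro τ₁ τ₂ h hpos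
    obtain ⟨i, -, hi⟩ : ∃ i ∈ Finset.univ, 0 < max (y i - τ₂) 0 := by
      by_contra hcon
      push_neg at hcon
      have : f τ₂ ≤ 0 := Finset.sum_nonpos fun i hi => hcon i hi
      linarith
    have hyi : τ₂ < y i := by
      rcases lt_max_iff.mp hi with h' | h'
      · linarith
      · exact absurd h' (lt_irrefl 0)
    refine Finset.sum_lt_sum (fun j _ => max_le_max (by linarith) le_rfl)
      ⟨i, Finset.mem_univ i, ?_⟩
    rw [max_eq_left (by linarith : (0:ℝ) ≤ y i - τ₂),
        max_eq_left (by linarith : (0:ℝ) ≤ y i - τ₁)]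
    linarith
  have hfcont : Continuous f := by
    apply continuous_finset_sum
    intro i _
    exact (continuous_const.sub continuous_id).max continuous_const
  -- existence of τ
  obtain ⟨τ₀, -, hτ₀⟩ : ∃ τ ∈ Set.Icc ((Finset.univ.inf' hune fun i => y i) - d)
      (Finset.univ.sup' hune fun i => y i), f τ = d := by
    set a := (Finset.univ.inf' hune fun i => y i) - d with ha
    set b := (Finset.univ.sup' hune fun i => y i) with hb
    obtain ⟨i₀⟩ := hne
    have hab : a ≤ b := by
      have h1 : (Finset.univ.inf' hune fun i => y i) ≤ y i₀ :=
        Finset.inf'_le _ (Finset.mem_univ i₀)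
      have h2 : y i₀ ≤ b := Finset.le_sup' _ (Finset.mem_univ i₀)
      simp only [ha]; linarith
    have hfb : f b = 0 := by
      apply Finset.sum_eq_zero
      intro i _
      have : y i ≤ b := Finset.le_sup' _ (Finset.mem_univ i)
      exact max_eq_right (by linarith)
    have hfa : d ≤ f a := by
      have h1 : (Finset.univ.inf' hune fun i => y i) ≤ y i₀ :=
        Finset.inf'_le _ (Finset.mem_univ i₀)
      have h2 : d ≤ max (y i₀ - a) 0 := by
        have : d ≤ y i₀ - a := by simp only [ha]; linarith
        exact this.trans (le_max_left _ _)
      exact h2.trans (Finset.single_le_sum (f := fun i => max (y i - a) 0)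
        (fun i _ => le_max_right _ _) (Finset.mem_univ i₀))
    have := intermediate_value_Icc' hab hfcont.continuousOn
    obtain ⟨τ, hτmem, hτ⟩ := this ⟨by linarith, hfa⟩
    exact ⟨τ, hτmem, hτ⟩
  have huniq : ∀ τ' : ℝ, f τ' = d → τ' = τ₀ := by
    intro τ' hτ'
    by_contra hneq
    rcases lt_or_gt_of_ne hneq with h | h
    · have := hanti τ' τ₀ h (by rw [hτ₀]; exact hd); rw [hτ₀, hτ'] at this; linarith
    · have := hanti τ₀ τ' h (by rw [hτ']; exact hd); rw [hτ₀, hτ'] at this; linarith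
  constructor
  · exact ⟨τ₀, hτ₀, huniq⟩
  · intro τ hτ x
    -- the candidate projection
    set xs : EuclideanSpace ℝ (Fin K) := WithLp.toLp 2 (fun i => max (y i - τ) 0 : Fin K → ℝ) with hxs
    have hxsi : ∀ i, xs i = max (y i - τ) 0 := fun i => rfl
    have hxsmem : xs ∈ S := by
      rw [hS]
      exact ⟨fun i => le_max_right _ _, hτ⟩
    -- variational inequality
    have hvar : ∀ z ∈ S, ∑ i, (y i - xs i) * (z i - xs i) ≤ 0 := by
      intro z hz
      rw [hS] at hz
      obtain ⟨hz1, hz2⟩ := hz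
      have hterm : ∀ i, (y i - xs i) * (z i - xs i) ≤ τ * (z i - xs i) := by
        intro i
        rcases le_or_gt 0 (y i - τ) with h | h
        · rw [hxsi, max_eq_left h]
          have : y i - (y i - τ) = τ := by ring
          rw [this]
        · rw [hxsi, max_eq_right h.le]
          have h1 : z i - 0 = z i := by ring
          rw [h1, sub_zero]
          exact mul_le_mul_of_nonneg_right (by linarith) (hz1 i)
      calc ∑ i, (y i - xs i) * (z i - xs i) ≤ ∑ i, τ * (z i - xs i) :=
            Finset.sum_le_sum fun i _ => hterm i
        _ = τ * (∑ i, z i - ∑ i, xs i) := by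
            rw [← Finset.mul_sum, Finset.sum_sub_distrib]
        _ = 0 := by
            have hxsum : ∑ i, xs i = d := hτ
            rw [hz2, hxsum, sub_self, mul_zero]
    -- distance comparison
    have hcomp : ∀ z ∈ S, ‖xs - y‖ ^ 2 + ‖z - xs‖ ^ 2 ≤ ‖z - y‖ ^ 2 := by
      intro z hz
      have := stmt7_expand z xs y
      have h2 := hvar z hz
      linarith
    constructor
    · rintro ⟨hxmem, hxmin⟩
      -- x is a minimizer, so is xs; show x = xs
      have h1 : ‖x - y‖ ≤ ‖xs - y‖ := hxmin xs hxsmem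
      have h2 : ‖xs - y‖ ^ 2 + ‖x - xs‖ ^ 2 ≤ ‖x - y‖ ^ 2 := hcomp x hxmem
      have h3 : ‖x - y‖ ^ 2 ≤ ‖xs - y‖ ^ 2 := by
        have := norm_nonneg (x - y)
        nlinarith [norm_nonneg (xs - y)]
      have h4 : ‖x - xs‖ ^ 2 ≤ 0 := by linarith
      have h5 : ‖x - xs‖ = 0 := by
        have := sq_nonneg ‖x - xs‖
        have := norm_nonneg (x - xs)
        nlinarith
      have h6 : x = xs := by
        have := norm_eq_zero.mp h5
        exact sub_eq_zero.mp this
      intro i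
      rw [h6]
    · intro hx
      have h6 : x = xs := by
        ext i
        rw [hx i]
      subst h6
      refine ⟨hxsmem, fun z hz => ?_⟩
      have := hcomp z hz
      have h7 : ‖xs - y‖ ^ 2 ≤ ‖z - y‖ ^ 2 := by
        nlinarith [sq_nonneg ‖z - xs‖]
      have := norm_nonneg (xs - y)
      have := norm_nonneg (z - y)
      nlinarith
end

section
/- Let C ⊆ ℝ^N be nonempty, closed and convex, let T : ℝ^N → ℝ^N be monotone and L-Lipschitz continuous, let z* be a solution of the variational inequality VI(T, C), and let τ > 0. Define the extra-gradient iterates z̃^k = Π_C(z^k − τ T(z^k)) and z^{k+1} = Π_C(z^k − τ T(z̃^k)). Then for every k, ‖z^{k+1} − z*‖² ≤ ‖z^k − z*‖² − (1 − τ²L²) ‖z^k − z̃^k‖². -/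
open scoped RealInnerProductSpace

/-- `x` is the Euclidean projection of `y` onto the set `C`. -/
def IsProjOn {E : Type*} [NormedAddCommGroup E] (C : Set E) (y x : E) : Prop :=
  x ∈ C ∧ ∀ z ∈ C, ‖x - y‖ ≤ ‖z - y‖

lemma isProjOn_inner_le {E : Type*} [NormedAddCommGroup E] [InnerProductSpace ℝ E]
    {C : Set E} (hconv : Convex ℝ C) {y p : E} (hp : IsProjOn C y p) :
    ∀ w ∈ C, ⟪y - p, w - p⟫ ≤ 0 := by
  obtain ⟨hpC, hmin⟩ := hp
  haveI : Nonempty C := ⟨⟨p, hpC⟩⟩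
  have hinf : ‖y - p‖ = ⨅ w : C, ‖y - w‖ := by
    apply le_antisymm
    · apply le_ciInf
      intro w
      rw [norm_sub_rev, norm_sub_rev y]
      exact hmin w w.2
    · have hbdd : BddBelow (Set.range fun w : C => ‖y - (w : E)‖) := by
        refine ⟨0, ?_⟩
        rintro _ ⟨w, rfl⟩
        positivity
      exact ciInf_le hbdd ⟨p, hpC⟩
  exact (norm_eq_iInf_iff_real_inner_le_zero hconv hpC).mp hinf

/-!
STATEMENT 12 (Key estimate of the extra-gradient method).
For a monotone `L`-Lipschitz operator `T`, a solution `z*` of `VI(T, C)` and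
step size `τ > 0`, the Korpelevich extra-gradient iterates
`z̃^k = Π_C(z^k − τ T(z^k))`, `z^{k+1} = Π_C(z^k − τ T(z̃^k))` satisfy
`‖z^{k+1} − z*‖² ≤ ‖z^k − z*‖² − (1 − τ²L²)‖z^k − z̃^k‖²`.
-/
set_option maxHeartbeats 1000000 in
theorem stmt_12
    {N : ℕ}
    (C : Set (EuclideanSpace ℝ (Fin N)))
    (hne : C.Nonempty) (hcl : IsClosed C) (hconv : Convex ℝ C)
    (T : EuclideanSpace ℝ (Fin N) → EuclideanSpace ℝ (Fin N))
    (L : ℝ) (hL : 0 ≤ L)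
    (hmono : ∀ u v, 0 ≤ ⟪T u - T v, u - v⟫)
    (hlip : ∀ u v, ‖T u - T v‖ ≤ L * ‖u - v‖)
    (zstar : EuclideanSpace ℝ (Fin N)) (hz1 : zstar ∈ C)
    (hz2 : ∀ z ∈ C, 0 ≤ ⟪T zstar, z - zstar⟫)
    (τ : ℝ) (hτ : 0 < τ)
    (z ztil : ℕ → EuclideanSpace ℝ (Fin N))
    (hztil : ∀ k, IsProjOn C (z k - τ • T (z k)) (ztil k))
    (hz : ∀ k, IsProjOn C (z k - τ • T (ztil k)) (z (k + 1))) :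
    ∀ k, ‖z (k + 1) - zstar‖ ^ 2
      ≤ ‖z k - zstar‖ ^ 2 - (1 - τ ^ 2 * L ^ 2) * ‖z k - ztil k‖ ^ 2 := by
  intro k
  set x := z k with hx
  set xt := ztil k with hxt
  set xp := z (k + 1) with hxp
  have hxtC : xt ∈ C := (hztil k).1
  have hxpC : xp ∈ C := (hz k).1
  -- projection inequalities
  have h1 : ⟪x - τ • T xt - xp, zstar - xp⟫ ≤ 0 :=
    isProjOn_inner_le hconv (hz k) zstar hz1
  have h2 : ⟪x - τ • T x - xt, xp - xt⟫ ≤ 0 :=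
    isProjOn_inner_le hconv (hztil k) xp hxpC
  -- monotonicity + VI solution
  have h3 : 0 ≤ ⟪T xt, xt - zstar⟫ := by
    have hm := hmono xt zstar
    have hv := hz2 xt hxtC
    have : ⟪T xt, xt - zstar⟫ = ⟪T xt - T zstar, xt - zstar⟫ + ⟪T zstar, xt - zstar⟫ := by
      rw [inner_sub_left]; ring
    linarith [this ▸ add_nonneg hm hv]
  -- Lipschitz + Cauchy-Schwarz
  have h4 : ⟪T x - T xt, xp - xt⟫ ≤ L * ‖x - xt‖ * ‖xp - xt‖ := by
    calc ⟪T x - T xt, xp - xt⟫ ≤ ‖T x - T xt‖ * ‖xp - xt‖ := real_inner_le_norm _ _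
      _ ≤ (L * ‖x - xt‖) * ‖xp - xt‖ :=
        mul_le_mul_of_nonneg_right (hlip x xt) (norm_nonneg _)
      _ = L * ‖x - xt‖ * ‖xp - xt‖ := by ring
  -- rewrite everything in terms of d1 = x - xt, d2 = xp - xt, d3 = zstar - xt
  have e1 : x - τ • T xt - xp = (x - xt) - (xp - xt) - τ • T xt := by abel
  have e2 : zstar - xp = (zstar - xt) - (xp - xt) := by abel
  have e3 : x - τ • T x - xt = (x - xt) - τ • T x := by abel
  have e4 : xt - zstar = -(zstar - xt) := by abel
  have e5 : xp - zstar = (xp - xt) - (zstar - xt) := by abel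
  have e6 : x - zstar = (x - xt) - (zstar - xt) := by abel
  rw [e1, e2] at h1
  rw [e3] at h2
  rw [e4] at h3
  rw [e5, e6]
  set d1 := x - xt
  set d2 := xp - xt
  set d3 := zstar - xt
  -- expand inner products
  simp only [inner_sub_left, inner_sub_right, real_inner_smul_left, inner_neg_right] at h1 h2 h3
  have g1 : ‖d2 - d3‖ ^ 2 = ‖d2‖ ^ 2 - 2 * ⟪d2, d3⟫ + ‖d3‖ ^ 2 := norm_sub_sq_real d2 d3
  have g2 : ‖d1 - d3‖ ^ 2 = ‖d1‖ ^ 2 - 2 * ⟪d1, d3⟫ + ‖d3‖ ^ 2 := norm_sub_sq_real d1 d3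
  rw [g1, g2]
  have hm1 : τ * ⟪T xt, d3⟫ ≤ 0 := by
    have := mul_nonneg hτ.le h3
    nlinarith
  have hm2 : τ * ⟪T x, d2⟫ - τ * ⟪T xt, d2⟫ ≤ τ * (L * ‖d1‖ * ‖d2‖) := by
    have h4' : ⟪T x, d2⟫ - ⟪T xt, d2⟫ ≤ L * ‖d1‖ * ‖d2‖ := by
      rwa [inner_sub_left] at h4
    nlinarith
  have hd1 : ⟪d1, d1⟫ = ‖d1‖ ^ 2 := real_inner_self_eq_norm_sq d1
  have hd2 : ⟪d2, d2⟫ = ‖d2‖ ^ 2 := real_inner_self_eq_norm_sq d2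
  have hsym12 : ⟪d2, d1⟫ = ⟪d1, d2⟫ := real_inner_comm _ _
  have hsym13 : ⟪d3, d1⟫ = ⟪d1, d3⟫ := real_inner_comm _ _
  have hsym23 : ⟪d3, d2⟫ = ⟪d2, d3⟫ := real_inner_comm _ _
  nlinarith [sq_nonneg (τ * L * ‖d1‖ - ‖d2‖), h1, h2, hm1, hm2,
    mul_nonneg (mul_nonneg hτ.le hL) (norm_nonneg d1)]
end
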